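/- Let m ≥ 2 and T ≥ 1 be integers, let E be a real vector space, let a_1,…,a_m : E → ℝ be linear functionals, let b_1,…,b_m ∈ ℝ and ρ_1,…,ρ_m > 0, and set η = √(log m / T); assume η ≤ 1/2. Let v_1,…,v_T ∈ E, and define the MW weight sequence with losses ℓ_t(i) = (b_i − a_i(v_t))/ρ_i. Assume that for every t and i, a_i(v_t) − b_i ∈ [−ρ_i, ρ_i], and that for every t, Σ_{i=1}^m q^{(t)}_i (b_i − a_i(v_t))/ρ_i ≥ 0 (i.e., v_t is feasible for the q^{(t)}-weighted combination of the constraints). Then the averaged point v̄ = (1/T) Σ_{t=1}^T v_t satisfies a_i(v̄) ≤ b_i + 2 ρ_i √(log m / T) for every i = 1,…,m. -/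

import Mathlib

lemma key_exp (x : ℝ) (hx : |x| ≤ 1/2) : Real.exp (-x - x^2) ≤ 1 - x := by
  obtain ⟨hax1, hax2⟩ := abs_le.mp hx
  have hy : |(-x - x^2)| ≤ 1 := by
    rw [abs_le]; constructor <;> nlinarith [sq_nonneg x]
  have h := Real.exp_bound hy (n := 4) (by norm_num)
  have h2 := (abs_le.mp h).2
  have hs : (∑ m ∈ Finset.range 4, (-x - x^2) ^ m / m.factorial)
      = 1 + (-x - x^2) + (-x - x^2)^2 / 2 + (-x - x^2)^3 / 6 := by
    rw [Finset.sum_range_succ, Finset.sum_range_succ, Finset.sum_range_succ,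
      Finset.sum_range_succ, Finset.sum_range_zero]
    norm_num [Nat.factorial]
  rw [hs] at h2
  have habs4 : |(-x - x^2)|^4 = (x + x^2)^4 := by
    rw [(by decide : Even 4).pow_abs]; ring
  rw [habs4] at h2
  have h3 : Real.exp (-x - x^2) ≤ 1 + (-x - x^2) + (-x - x^2)^2 / 2
      + (-x - x^2)^3 / 6 + (x + x^2)^4 * (5 / 96) := by
    norm_num [Nat.factorial] at h2 ⊢
    linarith
  nlinarith [sq_nonneg x, sq_nonneg (x + x^2), sq_nonneg (x - x^2), sq_nonneg (x*(1-2*x)),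
    sq_nonneg (x*(1+2*x)),
    mul_nonneg (mul_nonneg (sq_nonneg x) (by linarith : (0:ℝ) ≤ 1/2 - x)) (by linarith : (0:ℝ) ≤ 1/2 + x),
    mul_nonneg (mul_nonneg (mul_nonneg (sq_nonneg x) (sq_nonneg x)) (by linarith : (0:ℝ) ≤ 1/2 - x)) (by linarith : (0:ℝ) ≤ 1/2 + x)]

theorem stmt_1 {E : Type*} [AddCommGroup E] [Module ℝ E]
    (m T : ℕ) (hm : 2 ≤ m) (hT : 1 ≤ T)
    (a : Fin m → E →ₗ[ℝ] ℝ) (b ρ : Fin m → ℝ) (hρ : ∀ i, 0 < ρ i)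
    (hη : Real.sqrt (Real.log m / T) ≤ 1 / 2)
    (v : ℕ → E)
    (p : ℕ → Fin m → ℝ)
    (hp0 : ∀ i, p 0 i = 1)
    (hpsucc : ∀ t i, p (t + 1) i
      = p t i * (1 - Real.sqrt (Real.log m / T) * ((b i - a i (v t)) / ρ i)))
    (hbound : ∀ t, t < T → ∀ i, a i (v t) - b i ∈ Set.Icc (-ρ i) (ρ i))
    (hfeas : ∀ t, t < T →
      0 ≤ ∑ i : Fin m, (p t i / ∑ i' : Fin m, p t i') * ((b i - a i (v t)) / ρ i)) :
    ∀ i : Fin m, a i ((T : ℝ)⁻¹ • ∑ t ∈ Finset.range T, v t)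
      ≤ b i + 2 * ρ i * Real.sqrt (Real.log m / T) := by
  intro i0
  haveI : Nonempty (Fin m) := ⟨⟨0, by omega⟩⟩
  set η := Real.sqrt (Real.log m / T) with hηdef
  have hTpos : (0:ℝ) < T := by exact_mod_cast hT
  have hm1 : (1:ℝ) < m := by
    have : (2:ℝ) ≤ m := by exact_mod_cast hm
    linarith
  have hlm : 0 < Real.log m := Real.log_pos hm1
  have hq0 : 0 ≤ Real.log m / T := le_of_lt (div_pos hlm hTpos)
  have hη2 : η^2 = Real.log m / T := Real.sq_sqrt hq0
  have hηpos : 0 < η := Real.sqrt_pos.mpr (div_pos hlm hTpos)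
  -- loss bound
  have hL : ∀ t, t < T → ∀ i, |(b i - a i (v t)) / ρ i| ≤ 1 := by
    intro t ht i
    obtain ⟨h1, h2⟩ := hbound t ht i
    rw [abs_div, abs_of_pos (hρ i), div_le_one (hρ i), abs_le]
    constructor <;> linarith
  have hLη : ∀ t, t < T → ∀ i, |η * ((b i - a i (v t)) / ρ i)| ≤ 1/2 := by
    intro t ht i
    rw [abs_mul, abs_of_pos hηpos]
    calc η * |(b i - a i (v t)) / ρ i| ≤ η * 1 :=
          mul_le_mul_of_nonneg_left (hL t ht i) hηpos.le
      _ ≤ 1/2 := by rw [mul_one]; exact hη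
  -- positivity of weights
  have hppos : ∀ t, t ≤ T → ∀ i, 0 < p t i := by
    intro t
    induction t with
    | zero => intro _ i; rw [hp0]; norm_num
    | succ t ih =>
      intro ht i
      have ht' : t < T := Nat.lt_of_succ_le ht
      rw [hpsucc]
      have h2 := (abs_le.mp (hLη t ht' i)).2
      exact mul_pos (ih ht'.le i) (by linarith)
  -- total weight bound
  have hΦ : ∀ t, t ≤ T → (∑ i : Fin m, p t i) ≤ m := by
    intro t
    induction t with
    | zero => intro _; simp [hp0]
    | succ t ih =>
      intro ht
      have ht' : t < T := Nat.lt_of_succ_le ht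
      have hSpos : 0 < ∑ i' : Fin m, p t i' :=
        Finset.sum_pos (fun i _ => hppos t ht'.le i)
          (Finset.univ_nonempty (α := Fin m))
      have hfe := hfeas t ht'
      have hsum : ∑ i : Fin m, (p t i / ∑ i' : Fin m, p t i') * ((b i - a i (v t)) / ρ i)
          = (∑ i : Fin m, p t i * ((b i - a i (v t)) / ρ i)) / (∑ i' : Fin m, p t i') := by
        rw [Finset.sum_div]
        exact Finset.sum_congr rfl (fun i _ => by ring)
      rw [hsum] at hfe
      have hnum : 0 ≤ ∑ i : Fin m, p t i * ((b i - a i (v t)) / ρ i) := by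
        rcases div_nonneg_iff.mp hfe with ⟨h, _⟩ | ⟨_, h⟩
        · exact h
        · linarith
      have hexp : ∑ i : Fin m, p (t+1) i
          = (∑ i : Fin m, p t i) - η * ∑ i : Fin m, p t i * ((b i - a i (v t)) / ρ i) := by
        simp only [hpsucc, mul_sub, mul_one, Finset.mul_sum, Finset.sum_sub_distrib]
        congr 1
        exact Finset.sum_congr rfl (fun i _ => by ring)
      rw [hexp]
      have : 0 ≤ η * ∑ i : Fin m, p t i * ((b i - a i (v t)) / ρ i) :=
        mul_nonneg hηpos.le hnum
      linarith [ih ht'.le]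
  -- lower bound on p T i0
  have hlow : ∀ t, t ≤ T →
      Real.exp (∑ s ∈ Finset.range t, (-(η * ((b i0 - a i0 (v s)) / ρ i0)) - η^2)) ≤ p t i0 := by
    intro t
    induction t with
    | zero => simp [hp0]
    | succ t ih =>
      intro ht
      have ht' : t < T := Nat.lt_of_succ_le ht
      rw [Finset.sum_range_succ, Real.exp_add, hpsucc]
      set x := η * ((b i0 - a i0 (v t)) / ρ i0) with hxdef
      have hx12 : |x| ≤ 1/2 := hLη t ht' i0
      have hxsq : x^2 ≤ η^2 := by
        have h1 := hL t ht' i0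
        have : x^2 = η^2 * ((b i0 - a i0 (v t)) / ρ i0)^2 := by rw [hxdef]; ring
        rw [this]
        have h2 : ((b i0 - a i0 (v t)) / ρ i0)^2 ≤ 1 := by
          rw [← sq_abs]
          nlinarith [abs_nonneg ((b i0 - a i0 (v t)) / ρ i0)]
        nlinarith [sq_nonneg η]
      have hkey : Real.exp (-x - η^2) ≤ 1 - x := by
        calc Real.exp (-x - η^2) ≤ Real.exp (-x - x^2) :=
              Real.exp_le_exp.mpr (by linarith)
          _ ≤ 1 - x := key_exp x hx12
      calc Real.exp (∑ s ∈ Finset.range t, (-(η * ((b i0 - a i0 (v s)) / ρ i0)) - η^2))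
            * Real.exp (-x - η^2)
          ≤ p t i0 * (1 - x) := by
            apply mul_le_mul (ih ht'.le) hkey (Real.exp_nonneg _)
            exact (hppos t ht'.le i0).le
        _ = p t i0 * (1 - x) := rfl
  -- combine at t = T
  have hle : p T i0 ≤ ∑ i : Fin m, p T i :=
    Finset.single_le_sum (fun i _ => (hppos T le_rfl i).le) (Finset.mem_univ i0)
  have hchain : Real.exp (∑ s ∈ Finset.range T,
      (-(η * ((b i0 - a i0 (v s)) / ρ i0)) - η^2)) ≤ (m : ℝ) :=
    le_trans (hlow T le_rfl) (le_trans hle (hΦ T le_rfl))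
  have hmpos : (0:ℝ) < m := by linarith
  have hlog : (∑ s ∈ Finset.range T, (-(η * ((b i0 - a i0 (v s)) / ρ i0)) - η^2))
      ≤ Real.log m := by
    rw [← Real.exp_le_exp, Real.exp_log hmpos]
    exact hchain
  set S := ∑ s ∈ Finset.range T, ((b i0 - a i0 (v s)) / ρ i0) with hSdef
  have hsum2 : (∑ s ∈ Finset.range T, (-(η * ((b i0 - a i0 (v s)) / ρ i0)) - η^2))
      = -η * S - η^2 * T := by
    have h1 : ∑ s ∈ Finset.range T, -(η * ((b i0 - a i0 (v s)) / ρ i0)) = -η * S := by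
      rw [hSdef, Finset.mul_sum]
      exact Finset.sum_congr rfl (fun s _ => by ring)
    rw [Finset.sum_sub_distrib, h1, Finset.sum_const, Finset.card_range, nsmul_eq_mul]
    ring
  rw [hsum2] at hlog
  have hlogeq : Real.log m = η^2 * T := by
    rw [hη2]; field_simp
  rw [hlogeq] at hlog
  -- hlog : -η * S - η^2 * T ≤ η^2 * T, so -S ≤ 2 * η * T
  have hS : -S ≤ 2 * η * T := by
    have h1 : -η * S ≤ 2 * (η^2 * T) := by linarith
    have h2 : η * (-S) ≤ η * (2 * η * T) := by nlinarith
    exact le_of_mul_le_mul_left h2 hηpos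
  -- unfold S : ∑ (b - a v)/ρ = (T*b - ∑ a v)/ρ
  have hSval : S = ((T : ℝ) * b i0 - ∑ t ∈ Finset.range T, a i0 (v t)) / ρ i0 := by
    rw [hSdef, ← Finset.sum_div]
    congr 1
    rw [Finset.sum_sub_distrib, Finset.sum_const, Finset.card_range, nsmul_eq_mul]
  have hρ0 := hρ i0
  have hfinal : ∑ t ∈ Finset.range T, a i0 (v t) ≤ (T:ℝ) * b i0 + ρ i0 * (2 * η * T) := by
    have h := hS
    rw [hSval, ← neg_div] at h
    rw [div_le_iff₀ hρ0] at h
    linarith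
  have hmap : a i0 ((T : ℝ)⁻¹ • ∑ t ∈ Finset.range T, v t)
      = (T : ℝ)⁻¹ * ∑ t ∈ Finset.range T, a i0 (v t) := by
    rw [map_smul, map_sum]
    rfl
  rw [hmap]
  rw [inv_mul_le_iff₀ hTpos]
  calc ∑ t ∈ Finset.range T, a i0 (v t)
      ≤ (T:ℝ) * b i0 + ρ i0 * (2 * η * T) := hfinal
    _ = (T:ℝ) * (b i0 + 2 * ρ i0 * η) := by ring
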